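/- Let k be a perfect field of characteristic p and K a finitely generated field extension of k. Then [K : K^p] = p^r, where r is the transcendence degree of K over k. -/

import Mathlib

set_option maxHeartbeats 1000000

open MvPolynomial IntermediateField Polynomial

lemma subfield_map_closure {K L : Type*} [Field K] [Field L] (f : K →+* L) (s : Set K) :
    (Subfield.closure s).map f = Subfield.closure (f '' s) := by
  apply le_antisymm
  · exact (Subfield.gc_map_comap f).l_le <| Subfield.closure_le.2 fun x hx =>
      Subfield.subset_closure (Set.mem_image_of_mem f hx)
  · exact Subfield.closure_le.2 <| Set.image_mono Subfield.subset_closure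

lemma key_not_mem (p : ℕ) [Fact p.Prime] {k K : Type*} [Field k] [Field K] [Algebra k K]
    {r : ℕ} {x : Fin r → K} (hx : AlgebraicIndependent k x) (i : Fin r) :
    x i ∉ IntermediateField.adjoin k (Set.range fun j => if j < i then x j else x j ^ p) := by
  have hp : p.Prime := Fact.out
  intro hmem
  set z : Fin r → K := fun j => if j < i then x j else x j ^ p with hzdef
  obtain ⟨A, B, hAB⟩ := (IntermediateField.mem_adjoin_range_iff k z (x i)).1 hmem
  have hXi : (X i : MvPolynomial (Fin r) k) ≠ 0 := MvPolynomial.X_ne_zero i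
  have hxi0 : x i ≠ 0 := by
    intro h
    apply hXi
    apply hx
    simpa [h] using (MvPolynomial.aeval_X (R := k) x i).trans h
  have hB0 : aeval z B ≠ 0 := by
    intro h
    rw [h, div_zero] at hAB
    exact hxi0 hAB
  have hBne : B ≠ 0 := fun h => hB0 (by simp [h])
  have hmul : x i * aeval z B = aeval z A := by
    rw [hAB, div_mul_cancel₀ _ hB0]
  -- substitution
  set e : Fin r → ℕ := fun j => if j < i then 1 else p with hedef
  have he0 : ∀ j, e j ≠ 0 := by
    intro j
    by_cases h : j < i <;> simp [hedef, h, hp.ne_zero]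
  set f : Fin r → MvPolynomial (Fin r) k := fun j => X j ^ e j with hfdef
  have hzf : ∀ Q : MvPolynomial (Fin r) k, aeval z Q = aeval x (bind₁ f Q) := by
    intro Q
    rw [aeval_bind₁]
    have : (fun j => aeval x (f j)) = z := by
      funext j
      by_cases h : j < i <;> simp [hfdef, hedef, hzdef, h]
    rw [this]
  have main : (X i : MvPolynomial (Fin r) k) * bind₁ f B = bind₁ f A := by
    apply hx
    rw [map_mul, ← hzf, ← hzf, MvPolynomial.aeval_X, hmul]
  -- monomial transform
  set m : (Fin r →₀ ℕ) → (Fin r →₀ ℕ) :=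
    fun d => Finsupp.equivFunOnFinite.symm (fun j => e j * d j) with hmdef
  have hmapp : ∀ d j, m d j = e j * d j := by intro d j; simp [hmdef]
  have hminj : Function.Injective m := by
    intro d d' h
    ext j
    have := congrFun (congrArg (fun u : Fin r →₀ ℕ => (u : Fin r → ℕ)) h) j
    simp only [hmapp] at this
    exact Nat.eq_of_mul_eq_mul_left (Nat.pos_of_ne_zero (he0 j)) this
  have hsupp : ∀ d : Fin r →₀ ℕ, (m d).support = d.support := by
    intro d
    ext j
    simp [Finsupp.mem_support_iff, hmapp, he0 j]
  have hσmon : ∀ (d : Fin r →₀ ℕ) (c : k), bind₁ f (monomial d c) = monomial (m d) c := by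
    intro d c
    rw [bind₁_monomial, monomial_eq, Finsupp.prod]
    rw [hsupp]
    congr 1
    apply Finset.prod_congr rfl
    intro j _
    rw [hfdef, ← pow_mul, hmapp]
  have hcoeff : ∀ (Q : MvPolynomial (Fin r) k) (d : Fin r →₀ ℕ),
      coeff (m d) (bind₁ f Q) = coeff d Q := by
    intro Q d
    conv_lhs => rw [Q.as_sum]
    rw [map_sum, MvPolynomial.coeff_sum]
    simp_rw [hσmon, MvPolynomial.coeff_monomial, hminj.eq_iff]
    rw [Finset.sum_ite_eq' Q.support d (fun x => coeff x Q)]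
    split
    · rfl
    · exact (MvPolynomial.notMem_support_iff.1 (by assumption)).symm
  -- pick a monomial of B
  obtain ⟨d₀, hd₀⟩ := (MvPolynomial.ne_zero_iff.1 hBne)
  have hcoe : coeff (m d₀ + Finsupp.single i 1) ((X i : MvPolynomial (Fin r) k) * bind₁ f B)
      = coeff d₀ B := by
    rw [add_comm, MvPolynomial.coeff_X_mul, hcoeff]
  rw [main] at hcoe
  -- coefficient of bind₁ f A at this exponent must come from a monomial m d
  have : ∃ d : Fin r →₀ ℕ, m d₀ + Finsupp.single i 1 = m d := by
    by_contra hcon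
    push_neg at hcon
    apply hd₀
    rw [← hcoe]
    conv_lhs => rw [A.as_sum]
    rw [map_sum, MvPolynomial.coeff_sum]
    apply Finset.sum_eq_zero
    intro d _
    rw [hσmon, MvPolynomial.coeff_monomial, if_neg]
    exact fun h => hcon d h.symm
  obtain ⟨d, hd⟩ := this
  have hdi := congrFun (congrArg (fun u : Fin r →₀ ℕ => (u : Fin r → ℕ)) hd) i
  simp only [Finsupp.coe_add, Pi.add_apply, Finsupp.single_eq_same, hmapp] at hdi
  have hei : e i = p := by simp [hedef]
  rw [hei] at hdi
  have hdvd : p ∣ 1 := by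
    have h1 : p ∣ p * d i := Dvd.intro _ rfl
    rw [← hdi] at h1
    exact (Nat.dvd_add_right (Dvd.intro _ rfl)).1 h1
  have := Nat.le_of_dvd one_pos hdvd
  have := hp.two_le
  omega

lemma adjoin_pow_relrank (p : ℕ) [Fact p.Prime] {k K : Type*} [Field k] [Field K] [Algebra k K]
    [CharP K p] {r : ℕ} {x : Fin r → K} (hx : AlgebraicIndependent k x) :
    IntermediateField.relrank (IntermediateField.adjoin k (Set.range fun j => x j ^ p))
      (IntermediateField.adjoin k (Set.range x)) = (p : Cardinal) ^ r := by
  have hp : p.Prime := Fact.out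
  set y : Fin r → K := fun j => x j ^ p with hydef
  set E : ℕ → IntermediateField k K :=
    fun t => adjoin k (Set.range y ∪ x '' {j | (j : ℕ) < t}) with hEdef
  have hE0 : E 0 = adjoin k (Set.range y) := by
    have h : Set.range y ∪ x '' {j : Fin r | (j : ℕ) < 0} = Set.range y := by
      have : x '' {j : Fin r | (j : ℕ) < 0} = ∅ := by simp
      rw [this, Set.union_empty]
    rw [hEdef]
    simp only
    rw [h]
  have hle : ∀ s t : ℕ, s ≤ t → E s ≤ E t := by
    intro s t hst
    apply IntermediateField.adjoin.mono
    apply Set.union_subset_union_right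
    apply Set.image_mono
    intro j hj
    exact lt_of_lt_of_le hj hst
  have hEr : E r = adjoin k (Set.range x) := by
    apply le_antisymm
    · rw [hEdef]
      apply IntermediateField.adjoin_le_iff.2
      apply Set.union_subset
      · rintro _ ⟨j, rfl⟩
        exact pow_mem (subset_adjoin k (Set.range x) ⟨j, rfl⟩) p
      · rintro _ ⟨j, _, rfl⟩
        exact subset_adjoin k (Set.range x) ⟨j, rfl⟩
    · apply IntermediateField.adjoin.mono
      rintro _ ⟨j, rfl⟩
      exact Set.mem_union_right _ ⟨j, j.isLt, rfl⟩
  -- the key step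
  have hstep : ∀ t, t < r → IntermediateField.relrank (E t) (E (t + 1)) = (p : Cardinal) := by
    intro t ht
    set i : Fin r := ⟨t, ht⟩ with hidef
    have hxt : x i ∉ E t := by
      intro hmem
      apply key_not_mem p hx i
      have hsub : E t ≤ adjoin k (Set.range fun j => if j < i then x j else x j ^ p) := by
        rw [hEdef]
        apply IntermediateField.adjoin_le_iff.2
        apply Set.union_subset
        · rintro _ ⟨j, rfl⟩
          by_cases h : j < i
          · have hy : y j = (if j < i then x j else x j ^ p) ^ p := by simp [hydef, h]
            rw [hy]
            exact pow_mem
              (subset_adjoin k (Set.range fun j => if j < i then x j else x j ^ p) ⟨j, rfl⟩) p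
          · have hy : y j = (if j < i then x j else x j ^ p) := by simp [hydef, h]
            rw [hy]
            exact subset_adjoin k (Set.range fun j => if j < i then x j else x j ^ p) ⟨j, rfl⟩
        · rintro _ ⟨j, hj, rfl⟩
          have hji : j < i := hj
          have hxx : x j = (if j < i then x j else x j ^ p) := by simp [hji]
          rw [hxx]
          exact subset_adjoin k (Set.range fun j => if j < i then x j else x j ^ p) ⟨j, rfl⟩
      exact hsub hmem
    have hc : x i ^ p ∈ E t := subset_adjoin k _ (Or.inl ⟨i, rfl⟩)
    set c : ↥(E t) := ⟨x i ^ p, hc⟩ with hcdef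
    set q : Polynomial ↥(E t) := Polynomial.X ^ p - Polynomial.C c with hqdef
    have hmonic : q.Monic := Polynomial.monic_X_pow_sub_C c hp.ne_zero
    have haev : Polynomial.aeval (x i) q = 0 := by
      rw [hqdef]
      rw [map_sub, map_pow, Polynomial.aeval_X, Polynomial.aeval_C]
      have : (algebraMap ↥(E t) K) c = x i ^ p := rfl
      rw [this, sub_self]
    have hint : IsIntegral ↥(E t) (x i) := ⟨q, hmonic, haev⟩
    have hirr : Irreducible q := by
      apply X_pow_sub_C_irreducible_of_prime hp
      intro b hb
      apply hxt
      have hbK : (b : K) ^ p = x i ^ p := congrArg Subtype.val hb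
      have : (b : K) = x i := frobenius_inj K p (by rwa [frobenius_def, frobenius_def])
      rw [← this]
      exact b.2
    have hmin : minpoly ↥(E t) (x i) = q := (minpoly.eq_of_irreducible_of_monic hirr haev hmonic).symm
    have h1 : E t ≤ E (t + 1) := hle t (t + 1) (Nat.le_succ t)
    rw [IntermediateField.relrank_eq_rank_of_le h1]
    have hxmem : x i ∈ E (t + 1) := by
      apply subset_adjoin
      exact Set.mem_union_right _ ⟨i, Nat.lt_succ_of_le le_rfl, rfl⟩
    have hES : extendScalars h1 = IntermediateField.adjoin ↥(E t) {x i} := by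
      apply IntermediateField.restrictScalars_injective k
      rw [extendScalars_restrictScalars, restrictScalars_adjoin]
      apply le_antisymm
      · apply IntermediateField.adjoin_le_iff.2
        apply Set.union_subset
        · rintro _ ⟨j, rfl⟩
          have hyj : y j ∈ E t := subset_adjoin k _ (Set.mem_union_left _ ⟨j, rfl⟩)
          exact subset_adjoin k _ (Set.mem_union_left _ hyj)
        · rintro _ ⟨j, hj, rfl⟩
          rcases Nat.lt_succ_iff_lt_or_eq.1 hj with h | h
          · have hxj : x j ∈ E t := subset_adjoin k _ (Set.mem_union_right _ ⟨j, h, rfl⟩)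
            exact subset_adjoin k _ (Set.mem_union_left _ hxj)
          · have hj : j = i := Fin.ext h
            rw [hj]
            exact subset_adjoin k _ (Set.mem_union_right _ rfl)
      · apply IntermediateField.adjoin_le_iff.2
        apply Set.union_subset
        · intro a ha
          exact hle t (t + 1) (Nat.le_succ t) ha
        · intro a ha
          rw [Set.mem_singleton_iff] at ha
          rw [ha]
          exact hxmem
    rw [hES]
    haveI : FiniteDimensional ↥(E t) ↥(adjoin ↥(E t) {x i}) :=
      IntermediateField.adjoin.finiteDimensional hint
    rw [← Module.finrank_eq_rank, IntermediateField.adjoin.finrank hint, hmin, hqdef,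
      Polynomial.natDegree_X_pow_sub_C]
  -- induction
  have hind : ∀ t, t ≤ r → IntermediateField.relrank (E 0) (E t) = (p : Cardinal) ^ t := by
    intro t
    induction t with
    | zero => intro _; rw [pow_zero]; exact IntermediateField.relrank_self (E 0)
    | succ t ih =>
      intro h
      rw [← IntermediateField.relrank_mul_relrank (hle 0 t (Nat.zero_le t))
        (hle t (t + 1) (Nat.le_succ t)), ih (Nat.le_of_succ_le h), hstep t h, pow_succ]
  rw [← hE0, ← hEr]
  exact hind r le_rfl

lemma frob_map_adjoin_toSubfield (p : ℕ) [Fact p.Prime] {k K : Type*} [Field k] [Field K]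
    [Algebra k K] [CharP k p] [CharP K p] [PerfectRing k p] {ι : Type*} (x : ι → K) :
    (IntermediateField.adjoin k (Set.range x)).toSubfield.map (frobenius K p)
      = (IntermediateField.adjoin k (Set.range fun i => x i ^ p)).toSubfield := by
  rw [IntermediateField.adjoin_toSubfield, IntermediateField.adjoin_toSubfield,
    subfield_map_closure]
  congr 1
  rw [Set.image_union]
  congr 1
  · ext a
    constructor
    · rintro ⟨_, ⟨c, rfl⟩, rfl⟩
      refine ⟨c ^ p, ?_⟩
      rw [map_pow]
      rw [frobenius_def]
    · rintro ⟨c, rfl⟩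
      obtain ⟨b, hb⟩ := surjective_frobenius k p c
      refine ⟨algebraMap k K b, ⟨b, rfl⟩, ?_⟩
      rw [← hb, frobenius_def, frobenius_def, map_pow]
  · rw [← Set.range_comp]
    congr 1

/-- The subfield of `p`-th powers of a field `K`. -/
def pthPowers (K : Type*) [Field K] (p : ℕ) : Subfield K :=
  Subfield.closure (Set.range fun a : K => a ^ p)

/-- The `p`-degree `[K : K^p]` as a cardinal. -/
noncomputable def pDeg (K : Type*) [Field K] (p : ℕ) : Cardinal :=
  Module.rank (pthPowers K p) K

/-- Let `k` be a perfect field of characteristic `p` and `K`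
a finitely generated field extension of `k`.  Then `[K : K^p] = p^r` where `r`
is the transcendence degree of `K` over `k` (expressed via a finite
transcendence basis). -/
theorem stmt2 (p : ℕ) [Fact p.Prime]
    (k K : Type*) [Field k] [Field K] [Algebra k K]
    [CharP k p] [CharP K p] [PerfectRing k p]
    (hfg : ∃ s : Finset K, IntermediateField.adjoin k (s : Set K) = ⊤)
    (ι : Type*) [Fintype ι] (x : ι → K) (hx : IsTranscendenceBasis k x) :
    pDeg K p = (p : Cardinal) ^ (Fintype.card ι) := by
  have hp : p.Prime := Fact.out
  set r := Fintype.card ι with hrdef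
  set x' : Fin r → K := x ∘ (Fintype.equivFin ι).symm with hx'def
  have hxind : AlgebraicIndependent k x' := hx.1.comp _ (Equiv.injective _)
  have hrange : Set.range x' = Set.range x := by
    rw [hx'def, Set.range_comp]
    rw [Equiv.range_eq_univ, Set.image_univ]
  -- the fields
  set F : IntermediateField k K := adjoin k (Set.range x) with hFdef
  set Fy : IntermediateField k K := adjoin k (Set.range fun j => x' j ^ p) with hFydef
  set Kp : Subfield K := (frobenius K p).fieldRange with hKpdef
  have hKpeq : pthPowers K p = Kp := by
    rw [pthPowers, hKpdef]
    have h : (Set.range fun a : K => a ^ p) = ((frobenius K p).fieldRange : Set K) := by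
      ext a
      simp only [Set.mem_range, SetLike.mem_coe, RingHom.mem_fieldRange]
      constructor
      · rintro ⟨b, rfl⟩; exact ⟨b, frobenius_def p b⟩
      · rintro ⟨b, rfl⟩; exact ⟨b, (frobenius_def p b).symm⟩
    rw [h, Subfield.closure_eq]
  -- Frobenius image of F
  have hmap : F.toSubfield.map (frobenius K p) = Fy.toSubfield := by
    rw [hFdef, ← hrange, frob_map_adjoin_toSubfield p x', hFydef]
  -- F is finite dimensional in K
  haveI halg : Algebra.IsAlgebraic F K := hx.isAlgebraic_field
  obtain ⟨s, hs⟩ := hfg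
  haveI : Finite (s : Set K) := s.finite_toSet
  have hint : ∀ a ∈ (s : Set K), IsIntegral F a := fun a _ => Algebra.IsIntegral.isIntegral a
  haveI hfd1 : FiniteDimensional F (adjoin F (s : Set K)) :=
    IntermediateField.finiteDimensional_adjoin hint
  have htop : adjoin F (s : Set K) = ⊤ := by
    apply IntermediateField.restrictScalars_injective k
    rw [restrictScalars_adjoin, IntermediateField.restrictScalars_top]
    apply le_antisymm le_top
    rw [← hs]
    apply IntermediateField.adjoin_le_iff.2
    intro a ha
    exact subset_adjoin k _ (Set.mem_union_right _ ha)
  haveI hfdK : FiniteDimensional F K := by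
    rw [htop] at hfd1
    exact (IntermediateField.topEquiv : (⊤ : IntermediateField F K) ≃ₐ[F] K).toLinearEquiv.finiteDimensional
  -- Subfield-level chain
  set Fs : Subfield K := F.toSubfield with hFsdef
  set Fys : Subfield K := Fy.toSubfield with hFysdef
  have hFyF : Fy ≤ F := by
    rw [hFydef, hFdef, ← hrange]
    apply IntermediateField.adjoin_le_iff.2
    rintro _ ⟨j, rfl⟩
    exact pow_mem (subset_adjoin k (Set.range x') ⟨j, rfl⟩) p
  have q3 : Fys ≤ Fs := fun a ha => hFyF ha
  have q5 : Fys ≤ Kp := by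
    rw [← hmap, hKpdef, RingHom.fieldRange_eq_map]
    exact (Subfield.gc_map_comap (frobenius K p)).monotone_l le_top
  have q1 : Subfield.relrank Fys Fs = (p : Cardinal) ^ r := by
    have h : IntermediateField.relrank Fy F = (p : Cardinal) ^ r := by
      rw [hFdef, ← hrange]
      exact adjoin_pow_relrank p hxind
    exact h
  have e1 : Subfield.relrank Fys Fs * Subfield.relrank Fs ⊤ = Subfield.relrank Fys ⊤ :=
    Subfield.relrank_mul_relrank q3 le_top
  have e2 : Subfield.relrank Fys Kp * Subfield.relrank Kp ⊤ = Subfield.relrank Fys ⊤ :=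
    Subfield.relrank_mul_relrank q5 le_top
  have e3 : Subfield.relrank Fys Kp = Subfield.relrank Fs ⊤ := by
    conv_rhs => rw [← Subfield.relrank_map_map Fs ⊤ (frobenius K p)]
    rw [hmap, ← RingHom.fieldRange_eq_map]
  set n : ℕ := Module.finrank F K with hndef
  have hn : n ≠ 0 := Module.finrank_pos.ne'
  have hR : Subfield.relrank Fs ⊤ = (n : Cardinal) := by
    calc Subfield.relrank Fs ⊤
        = Subfield.relrank Fs (⊤ : IntermediateField k K).toSubfield := by
          rw [IntermediateField.top_toSubfield]
      _ = IntermediateField.relrank F ⊤ := rfl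
      _ = Module.rank F K := IntermediateField.relrank_top_right F
      _ = (n : Cardinal) := (Module.finrank_eq_rank F K).symm
  set C : Cardinal := Subfield.relrank Kp ⊤ with hCdef
  have emain : (p : Cardinal) ^ r * (n : Cardinal) = (n : Cardinal) * C := by
    rw [← q1, ← hR, e1, ← e2, e3, hR]
  have hfin : (p : Cardinal) ^ r * (n : Cardinal) < Cardinal.aleph0 := by
    rw [← Nat.cast_pow, ← Nat.cast_mul]
    exact Cardinal.nat_lt_aleph0 _
  have hCfin : C < Cardinal.aleph0 := by
    by_contra h
    push_neg at h
    have h2 : Cardinal.aleph0 ≤ (n : Cardinal) * C :=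
      le_trans h (Cardinal.le_mul_left (Nat.cast_ne_zero.2 hn))
    rw [← emain] at h2
    exact absurd hfin (not_lt.2 h2)
  obtain ⟨cn, hcn⟩ := Cardinal.lt_aleph0.1 hCfin
  have hnat : p ^ r * n = n * cn := by
    rw [hcn] at emain
    have : ((p ^ r * n : ℕ) : Cardinal) = ((n * cn : ℕ) : Cardinal) := by
      push_cast
      exact emain
    exact_mod_cast this
  have hcn2 : cn = p ^ r := by
    have := hnat.symm.trans (mul_comm (p ^ r) n)
    exact Nat.eq_of_mul_eq_mul_left (Nat.pos_of_ne_zero hn) this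
  have hpd : pDeg K p = C := by
    show Module.rank (pthPowers K p) K = C
    rw [hKpeq, hCdef, Subfield.relrank_top_right]
  rw [hpd, hcn, hcn2]
  rw [Nat.cast_pow]
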